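/- arXiv:1607.01058 — 2 statements merged into one kernel-verified Lean document; each statement's English description precedes it below -/
import Mathlib

section
/- Let $N_p \subseteq \mathbb{C}^{d_p}$ and $N_q \subseteq \mathbb{C}^{d_q}$ be linear subspaces of dimensions $e_p$ and $e_q$ respectively, with Plücker coordinates $(\Delta_{I'})_{|I'|=e_p}$ and $(\Delta_{J'})_{|J'|=e_q}$, and let $A = (m_{j,i})$ be a $d_q \times d_p$ complex matrix with $A(N_p) \subseteq N_q$. Then for every subset $I \subseteq \{1,\dots,d_p\}$ with $|I| = e_p - 1$ and every subset $J \subseteq \{1,\dots,d_q\}$ with $|J| = e_q + 1$, the quiver Plücker relation holds: $\sum_{i \in \{1,\dots,d_p\}\setminus I,\; j \in J} (-1)^{\epsilon(i,I)+\epsilon(j,J)}\, m_{j,i}\, \Delta_{I\cup\{i\}}\, \Delta_{J\setminus\{j\}} = 0$. -/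
open Matrix Finset

def eps {d : ℕ} (i : Fin d) (I : Finset (Fin d)) : ℕ := (I.filter fun i' => i' ≤ i).card

noncomputable def plucker {d e : ℕ} (B : Matrix (Fin d) (Fin e) ℂ) (I : Finset (Fin d)) : ℂ :=
  if h : I.card = e then (B.submatrix (fun k => (I.orderIsoOfFin h k : Fin d)) id).det else 0

/-- The columns of `B` form a basis of the subspace `N` of `ℂ^d`. -/
def IsColBasis {d e : ℕ} (B : Matrix (Fin d) (Fin e) ℂ) (N : Submodule ℂ (Fin d → ℂ)) : Prop :=
  LinearIndependent ℂ (fun l => fun i => B i l) ∧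
    Submodule.span ℂ (Set.range fun l => fun i => B i l) = N

noncomputable def qpr {dp dq ep eq : ℕ} (A : Matrix (Fin dq) (Fin dp) ℂ)
    (Bp : Matrix (Fin dp) (Fin ep) ℂ) (Bq : Matrix (Fin dq) (Fin eq) ℂ)
    (I : Finset (Fin dp)) (J : Finset (Fin dq)) : ℂ :=
  ∑ i ∈ Iᶜ, ∑ j ∈ J,
    (-1 : ℂ) ^ (eps i I + eps j J) * A j i * plucker Bp (insert i I) * plucker Bq (J.erase j)

/- ---------- auxiliary lemmas ---------- -/

lemma plucker_eq {d e : ℕ} (B : Matrix (Fin d) (Fin e) ℂ) {I : Finset (Fin d)}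
    (h : I.card = e) :
    plucker B I = (B.submatrix (⇑(I.orderEmbOfFin h)) id).det := by
  rw [plucker, dif_pos h]; rfl

lemma sgn_aux (x y : ℕ) : ((-1 : ℂ)) ^ (x + 2 * y) = (-1) ^ x := by
  rw [pow_add, pow_mul, neg_one_sq, one_pow, mul_one]

lemma image_orderEmbOfFin {d n : ℕ} (S : Finset (Fin d)) (h : S.card = n) :
    Finset.image (S.orderEmbOfFin h) Finset.univ = S := by
  apply Finset.coe_injective
  simp [Set.image_univ]

lemma sum_orderEmbOfFin {d n : ℕ} (S : Finset (Fin d)) (h : S.card = n) (g : Fin d → ℂ) :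
    ∑ j ∈ S, g j = ∑ a : Fin n, g (S.orderEmbOfFin h a) := by
  rw [← Finset.sum_image (g := ⇑(S.orderEmbOfFin h)) (f := g)
      (fun a _ b _ hab => (S.orderEmbOfFin h).injective hab), image_orderEmbOfFin]

lemma erase_orderEmbOfFin {d n : ℕ} {S : Finset (Fin d)} (h : S.card = n + 1) (k : Fin (n + 1))
    (h' : (S.erase (S.orderEmbOfFin h k)).card = n) :
    ⇑((S.erase (S.orderEmbOfFin h k)).orderEmbOfFin h')
      = ⇑(S.orderEmbOfFin h) ∘ k.succAbove := by
  symm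
  apply Finset.orderEmbOfFin_unique h'
  · intro x
    refine Finset.mem_erase.mpr ⟨fun hx => ?_, Finset.orderEmbOfFin_mem _ _ _⟩
    exact Fin.succAbove_ne k x ((S.orderEmbOfFin h).injective hx)
  · exact (S.orderEmbOfFin h).strictMono.comp (Fin.strictMono_succAbove k)

lemma eps_orderEmbOfFin {d n : ℕ} {S : Finset (Fin d)} (h : S.card = n + 1) (k : Fin (n + 1)) :
    eps (S.orderEmbOfFin h k) S = (k : ℕ) + 1 := by
  have hfilter : S.filter (fun i' => i' ≤ S.orderEmbOfFin h k)
      = (Finset.Iic k).image (S.orderEmbOfFin h) := by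
    ext x
    simp only [Finset.mem_filter, Finset.mem_image, Finset.mem_Iic]
    constructor
    · rintro ⟨hxS, hxle⟩
      obtain ⟨l, rfl⟩ : x ∈ Set.range ⇑(S.orderEmbOfFin h) := by
        rw [Finset.range_orderEmbOfFin]; exact_mod_cast hxS
      exact ⟨l, (S.orderEmbOfFin h).le_iff_le.mp hxle, rfl⟩
    · rintro ⟨l, hl, rfl⟩
      exact ⟨Finset.orderEmbOfFin_mem _ _ _, (S.orderEmbOfFin h).le_iff_le.mpr hl⟩
  rw [eps, hfilter, Finset.card_image_of_injective _ (S.orderEmbOfFin h).injective, Fin.card_Iic]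

/-- For every vector in the column span of `B`, the alternating Laplace-type sum vanishes. -/
lemma key2 {d n : ℕ} (B : Matrix (Fin d) (Fin n) ℂ) (J : Finset (Fin d)) (hJ : J.card = n + 1)
    (w : Fin d → ℂ) (hw : w ∈ Submodule.span ℂ (Set.range fun l => fun i => B i l)) :
    ∑ j ∈ J, (-1 : ℂ) ^ eps j J * w j * plucker B (J.erase j) = 0 := by
  let F : (Fin d → ℂ) →ₗ[ℂ] ℂ :=
    { toFun := fun u => ∑ j ∈ J, (-1 : ℂ) ^ eps j J * u j * plucker B (J.erase j)
      map_add' := fun u u' => by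
        rw [← Finset.sum_add_distrib]
        exact Finset.sum_congr rfl fun j _ => by simp; ring
      map_smul' := fun r u => by
        simp only [RingHom.id_apply, smul_eq_mul, Finset.mul_sum]
        exact Finset.sum_congr rfl fun j _ => by simp; ring }
  have hgen : Submodule.span ℂ (Set.range fun l => fun i => B i l) ≤ LinearMap.ker F := by
    rw [Submodule.span_le]
    rintro _ ⟨l, rfl⟩
    have hFl : F (fun i => B i l)
        = ∑ j ∈ J, (-1 : ℂ) ^ eps j J * B j l * plucker B (J.erase j) := rfl
    have hca : ∀ a : Fin (n + 1), (J.erase (J.orderEmbOfFin hJ a)).card = n := fun a => by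
      rw [Finset.card_erase_of_mem (Finset.orderEmbOfFin_mem _ _ _), hJ]
      omega
    -- the square matrix with a duplicated column
    set M : Matrix (Fin (n + 1)) (Fin (n + 1)) ℂ :=
      Matrix.of (fun a => Fin.snoc (B (J.orderEmbOfFin hJ a)) (B (J.orderEmbOfFin hJ a) l))
      with hM
    have hdet0 : M.det = 0 := by
      apply Matrix.det_zero_of_column_eq (i := Fin.castSucc l) (j := Fin.last n)
        (Fin.castSucc_lt_last l).ne
      intro a
      simp [hM, Fin.snoc_castSucc, Fin.snoc_last]
    have hexp : M.det = ∑ a : Fin (n + 1),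
        (-1 : ℂ) ^ ((a : ℕ) + n) * B (J.orderEmbOfFin hJ a) l *
          (B.submatrix (⇑(J.orderEmbOfFin hJ) ∘ a.succAbove) id).det := by
      rw [Matrix.det_succ_column M (Fin.last n)]
      refine Finset.sum_congr rfl fun a _ => ?_
      have h1 : M a (Fin.last n) = B (J.orderEmbOfFin hJ a) l := by
        simp [hM, Fin.snoc_last]
      have h2 : M.submatrix a.succAbove (Fin.last n).succAbove
          = B.submatrix (⇑(J.orderEmbOfFin hJ) ∘ a.succAbove) id := by
        ext a' b'
        simp [hM, Fin.succAbove_last, Fin.snoc_castSucc]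
      rw [h1, h2, Fin.val_last]
    simp only [SetLike.mem_coe, LinearMap.mem_ker]
    show F (fun i => B i l) = 0
    rw [hFl,
      sum_orderEmbOfFin J hJ (fun j => (-1 : ℂ) ^ eps j J * B j l * plucker B (J.erase j))]
    have step : ∀ a : Fin (n + 1),
        (-1 : ℂ) ^ eps (J.orderEmbOfFin hJ a) J * B (J.orderEmbOfFin hJ a) l *
          plucker B (J.erase (J.orderEmbOfFin hJ a))
        = (-1 : ℂ) ^ (n + 1) *
          ((-1 : ℂ) ^ ((a : ℕ) + n) * B (J.orderEmbOfFin hJ a) l *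
            (B.submatrix (⇑(J.orderEmbOfFin hJ) ∘ a.succAbove) id).det) := by
      intro a
      rw [eps_orderEmbOfFin hJ a, plucker_eq B (hca a), erase_orderEmbOfFin hJ a (hca a)]
      have hsg : (-1 : ℂ) ^ ((a : ℕ) + 1) = (-1 : ℂ) ^ (n + 1) * (-1 : ℂ) ^ ((a : ℕ) + n) := by
        rw [← pow_add, show (n + 1) + ((a : ℕ) + n) = ((a : ℕ) + 1) + 2 * n by omega, sgn_aux]
      rw [hsg]; ring
    rw [Finset.sum_congr rfl (fun a _ => step a), ← Finset.mul_sum, ← hexp, hdet0, mul_zero]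
  have := hgen hw
  rw [LinearMap.mem_ker] at this
  exact this

theorem stmt1 {dp dq ep eq : ℕ}
    (Np : Submodule ℂ (Fin dp → ℂ)) (Nq : Submodule ℂ (Fin dq → ℂ))
    (Bp : Matrix (Fin dp) (Fin ep) ℂ) (Bq : Matrix (Fin dq) (Fin eq) ℂ)
    (hBp : IsColBasis Bp Np) (hBq : IsColBasis Bq Nq)
    (A : Matrix (Fin dq) (Fin dp) ℂ)
    (hA : ∀ x ∈ Np, A.mulVec x ∈ Nq)
    (I : Finset (Fin dp)) (hI : I.card + 1 = ep)
    (J : Finset (Fin dq)) (hJ : J.card = eq + 1) :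
    qpr A Bp Bq I J = 0 := by
  subst hI
  have hIc : I.card = I.card := rfl
  set Iemb := I.orderEmbOfFin hIc with hIemb
  set c : Fin (I.card + 1) → ℂ :=
    fun l => (-1 : ℂ) ^ (l : ℕ) * (Bp.submatrix (⇑Iemb) l.succAbove).det with hc
  set v : Fin dp → ℂ := fun i => ∑ l : Fin (I.card + 1), Bp i l * c l with hv
  have hcl : ∀ l : Fin (I.card + 1),
      c l = (-1 : ℂ) ^ (l : ℕ) * (Bp.submatrix (⇑Iemb) l.succAbove).det := fun l => rfl
  have hvl : ∀ i, v i = ∑ l : Fin (I.card + 1), Bp i l * c l := fun i => rfl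
  -- v is in Np
  have hvN : v ∈ Np := by
    rw [← hBp.2]
    have hve : v = ∑ l : Fin (I.card + 1), c l • (fun i => Bp i l) := by
      ext i
      rw [hvl i]
      simp only [Finset.sum_apply, Pi.smul_apply, smul_eq_mul]
      exact Finset.sum_congr rfl fun l _ => mul_comm _ _
    rw [hve]
    exact Submodule.sum_mem _ fun l _ =>
      Submodule.smul_mem _ _ (Submodule.subset_span ⟨l, rfl⟩)
  -- v vanishes on I
  have hvI : ∀ i ∈ I, v i = 0 := by
    intro i hi
    obtain ⟨k', hk'⟩ : ∃ k', Iemb k' = i := by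
      have : i ∈ Set.range ⇑Iemb := by
        rw [hIemb, Finset.range_orderEmbOfFin]; exact_mod_cast hi
      exact this
    set M : Matrix (Fin (I.card + 1)) (Fin (I.card + 1)) ℂ :=
      Bp.submatrix (Fin.snoc (⇑Iemb) i) id with hM
    have hdet0 : M.det = 0 := by
      apply Matrix.det_zero_of_row_eq (i := Fin.castSucc k') (j := Fin.last I.card)
        (Fin.castSucc_lt_last k').ne
      ext b
      simp [hM, Fin.snoc_castSucc, Fin.snoc_last, hk']
    have hexp : M.det = ∑ l : Fin (I.card + 1),
        (-1 : ℂ) ^ (I.card + (l : ℕ)) * Bp i l * (Bp.submatrix (⇑Iemb) l.succAbove).det := by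
      rw [Matrix.det_succ_row M (Fin.last I.card)]
      refine Finset.sum_congr rfl fun l _ => ?_
      have h1 : M (Fin.last I.card) l = Bp i l := by simp [hM, Fin.snoc_last]
      have h2 : M.submatrix (Fin.last I.card).succAbove l.succAbove
          = Bp.submatrix (⇑Iemb) l.succAbove := by
        ext a' b'
        simp [hM, Fin.succAbove_last, Fin.snoc_castSucc]
      rw [h1, h2, Fin.val_last]
    have hfin : v i = (-1 : ℂ) ^ I.card * M.det := by
      rw [hvl i, hexp, Finset.mul_sum]
      refine Finset.sum_congr rfl fun l _ => ?_
      have hsg : (-1 : ℂ) ^ (l : ℕ) = (-1 : ℂ) ^ I.card * (-1 : ℂ) ^ (I.card + (l : ℕ)) := by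
        rw [← pow_add, show I.card + (I.card + (l : ℕ)) = (l : ℕ) + 2 * I.card by omega, sgn_aux]
      rw [hcl l, hsg]; ring
    rw [hfin, hdet0, mul_zero]
  -- v computes the signed Plücker coordinates off I
  have hvP : ∀ i ∉ I, v i = (-1 : ℂ) ^ eps i I * plucker Bp (insert i I) := by
    intro i hi
    have hS : (insert i I).card = I.card + 1 := by rw [Finset.card_insert_of_notMem hi]
    obtain ⟨k, hk⟩ : ∃ k, (insert i I).orderEmbOfFin hS k = i := by
      have : i ∈ Set.range ⇑((insert i I).orderEmbOfFin hS) := by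
        rw [Finset.range_orderEmbOfFin]
        exact_mod_cast Finset.mem_insert_self i I
      exact this
    have hkv : (k : ℕ) = eps i I := by
      have h1 : eps i (insert i I) = (k : ℕ) + 1 := by
        have := eps_orderEmbOfFin hS k
        rw [hk] at this
        exact this
      have h2 : eps i (insert i I) = eps i I + 1 := by
        rw [eps, eps, Finset.filter_insert, if_pos le_rfl,
          Finset.card_insert_of_notMem (fun hmem => hi (Finset.mem_filter.mp hmem).1)]
      omega
    have hemb : ⇑((insert i I).orderEmbOfFin hS) ∘ k.succAbove = ⇑Iemb := by
      rw [hIemb]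
      apply Finset.orderEmbOfFin_unique hIc
      · intro x
        have hmem := Finset.orderEmbOfFin_mem (insert i I) hS (k.succAbove x)
        rcases Finset.mem_insert.mp hmem with hx | hx
        · exact absurd (((insert i I).orderEmbOfFin hS).injective (hx.trans hk.symm))
            (Fin.succAbove_ne k x)
        · exact hx
      · exact ((insert i I).orderEmbOfFin hS).strictMono.comp (Fin.strictMono_succAbove k)
    have hexp : plucker Bp (insert i I) = ∑ l : Fin (I.card + 1),
        (-1 : ℂ) ^ ((k : ℕ) + (l : ℕ)) * Bp i l * (Bp.submatrix (⇑Iemb) l.succAbove).det := by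
      rw [plucker_eq Bp hS, Matrix.det_succ_row _ k]
      refine Finset.sum_congr rfl fun l _ => ?_
      have h1 : (Bp.submatrix (⇑((insert i I).orderEmbOfFin hS)) id) k l = Bp i l := by
        rw [Matrix.submatrix_apply, hk]; rfl
      have h2 : (Bp.submatrix (⇑((insert i I).orderEmbOfFin hS)) id).submatrix
            k.succAbove l.succAbove
          = Bp.submatrix (⇑Iemb) l.succAbove := by
        ext a b
        simp only [Matrix.submatrix_apply, id_eq]
        have := congrFun hemb a
        simp only [Function.comp_apply] at this
        rw [this]
      rw [h1, h2]
    rw [hvl i, hexp, Finset.mul_sum]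
    refine Finset.sum_congr rfl fun l _ => ?_
    have hsg : (-1 : ℂ) ^ (l : ℕ)
        = (-1 : ℂ) ^ eps i I * (-1 : ℂ) ^ ((k : ℕ) + (l : ℕ)) := by
      rw [← pow_add, ← hkv,
        show (k : ℕ) + ((k : ℕ) + (l : ℕ)) = (l : ℕ) + 2 * (k : ℕ) by omega, sgn_aux]
    rw [hcl l, hsg]; ring
  -- the image vector
  set w : Fin dq → ℂ := A.mulVec v with hw
  have hwN : w ∈ Submodule.span ℂ (Set.range fun l => fun i => Bq i l) := by
    rw [hBq.2]
    exact hA v hvN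
  have hwj : ∀ j, ∑ i ∈ Iᶜ, A j i * v i = w j := by
    intro j
    have : w j = ∑ i, A j i * v i := rfl
    rw [this]
    refine Finset.sum_subset (Finset.subset_univ _) fun i _ hi => ?_
    rw [hvI i (by simpa using hi), mul_zero]
  rw [qpr, Finset.sum_comm]
  have main : ∀ j ∈ J, ∑ i ∈ Iᶜ,
      (-1 : ℂ) ^ (eps i I + eps j J) * A j i * plucker Bp (insert i I) * plucker Bq (J.erase j)
      = (-1 : ℂ) ^ eps j J * w j * plucker Bq (J.erase j) := by
    intro j hj
    have step : ∀ i ∈ Iᶜ,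
        (-1 : ℂ) ^ (eps i I + eps j J) * A j i * plucker Bp (insert i I) * plucker Bq (J.erase j)
        = (-1 : ℂ) ^ eps j J * (A j i * v i) * plucker Bq (J.erase j) := by
      intro i hi
      rw [hvP i (Finset.mem_compl.mp hi), pow_add]
      ring
    rw [Finset.sum_congr rfl step, ← Finset.sum_mul, ← Finset.mul_sum, hwj j]
  rw [Finset.sum_congr rfl main]
  exact key2 Bq J hJ w hwN
end

section
/- Let $(\Delta_1,\Delta_2,\Delta_3) \in \mathbb{C}^3$ and $(\Delta_{456},\Delta_{457},\Delta_{467},\Delta_{567}) \in \mathbb{C}^4$ satisfy $\Delta_3\Delta_{456} = \Delta_1\Delta_{567}$, $\Delta_3\Delta_{457} = \Delta_2\Delta_{567}$, $\Delta_3\Delta_{467} = \Delta_1\Delta_{456}$, and $\Delta_1\Delta_{567} - \Delta_1\Delta_{467} + \Delta_2\Delta_{457} = 0$. If $\Delta_3 \ne 0$ and $\Delta_{567} \ne 0$, then $\Delta_2^2\Delta_3 - \Delta_1^3 + \Delta_1\Delta_3^2 = 0$. -/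
theorem stmt12 (Δ1 Δ2 Δ3 Δ456 Δ457 Δ467 Δ567 : ℂ)
    (h1 : Δ3 * Δ456 = Δ1 * Δ567) (h2 : Δ3 * Δ457 = Δ2 * Δ567)
    (h3 : Δ3 * Δ467 = Δ1 * Δ456)
    (h4 : Δ1 * Δ567 - Δ1 * Δ467 + Δ2 * Δ457 = 0)
    (h3ne : Δ3 ≠ 0) (h567ne : Δ567 ≠ 0) :
    Δ2 ^ 2 * Δ3 - Δ1 ^ 3 + Δ1 * Δ3 ^ 2 = 0 := by
  have key : Δ567 * (Δ2 ^ 2 * Δ3 - Δ1 ^ 3 + Δ1 * Δ3 ^ 2) = 0 := by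
    linear_combination Δ3 ^ 2 * h4 + Δ1 * Δ3 * h3 - Δ2 * Δ3 * h2 + Δ1 ^ 2 * h1
  rcases mul_eq_zero.mp key with h | h
  · exact absurd h h567ne
  · exact h
end
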